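/- Let J, u, P : ℝ × [0,T] → ℝ and ω, h : ℝ × [0,T] → ℝ² be functions with J > 0 everywhere, such that for each fixed y the map t ↦ P(y,t) is continuously differentiable, the functions G(y,·), H(y,·), F(y,·), h(y,·) are continuous, and the pressure equation ∂_t P + γ (∂_y u / J) P = (γ−1)( λ (∂_y u / J)² + μ |∂_y ω / J|² ) holds pointwise. Then, with G := λ ∂_y u / J − P − |h|²/(8π), F := μ ∂_y ω / J + h/(4π), and H := |h|², one has for all (y,t): P(y,t) ≤ P(y,0) + ∫₀ᵗ [ (γ²/(4λ))( G(y,s) + H(y,s)/(8π) )² + ((γ−1)/μ) |F(y,s) − h(y,s)/(4π)|² ] ds. -/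

import Mathlib

open Real MeasureTheory
open scoped InnerProductSpace

noncomputable section

/-- The plane `ℝ²` as a Euclidean space, target of the transverse velocity and
magnetic field. -/
abbrev E2 := EuclideanSpace ℝ (Fin 2)

/-- Partial derivative in time of a scalar field `f = f(y, t)`. -/
def pdt (f : ℝ → ℝ → ℝ) (y t : ℝ) : ℝ := deriv (fun s => f y s) t

/-- Partial derivative in space of a scalar field `f = f(y, t)`. -/
def pdy (f : ℝ → ℝ → ℝ) (y t : ℝ) : ℝ := deriv (fun z => f z t) y

/-- Partial derivative in time of an `ℝ²`-valued field. -/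
def pdtV (f : ℝ → ℝ → E2) (y t : ℝ) : E2 := deriv (fun s => f y s) t

/-- Partial derivative in space of an `ℝ²`-valued field. -/
def pdyV (f : ℝ → ℝ → E2) (y t : ℝ) : E2 := deriv (fun z => f z t) y

/-- The effective viscous flux `G := λ ∂_y u / J − P − |h|²/(8π)`. -/
def Gflux (lam : ℝ) (J u P : ℝ → ℝ → ℝ) (h : ℝ → ℝ → E2) : ℝ → ℝ → ℝ := fun y t =>
  lam * pdy u y t / J y t - P y t - ‖h y t‖ ^ 2 / (8 * π)

/-- The transverse effective viscous flux `F := μ ∂_y ω / J + h/(4π)`. -/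
def Fflux (mu : ℝ) (J : ℝ → ℝ → ℝ) (ω h : ℝ → ℝ → E2) : ℝ → ℝ → E2 := fun y t =>
  mu • ((J y t)⁻¹ • pdyV ω y t) + (1 / (4 * π)) • h y t

/-- The squared magnetic field `H := |h|²`. -/
def Hfield (h : ℝ → ℝ → E2) : ℝ → ℝ → ℝ := fun y t => ‖h y t‖ ^ 2

/-- if `J > 0`, for each `y` the map `t ↦ P(y,t)` is continuously
differentiable on `[0,T]` (with derivative `P'`), the maps `G(y,·)`, `H(y,·)`, `F(y,·)`,
`h(y,·)` are continuous, and the pressure equation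
`∂ₜ P + γ (∂_y u / J) P = (γ−1)(λ (∂_y u / J)² + μ |∂_y ω / J|²)` holds pointwise, then
for all `(y,t)`:
`P(y,t) ≤ P(y,0) + ∫₀ᵗ [ (γ²/(4λ))(G + H/(8π))² + ((γ−1)/μ)|F − h/(4π)|² ](y,s) ds`. -/
theorem stmt_11 (T lam mu gam : ℝ) (hT : 0 < T) (hlam : 0 < lam) (hmu : 0 < mu)
    (hgam : 1 < gam)
    (J u P : ℝ → ℝ → ℝ) (ω h : ℝ → ℝ → E2) (P' : ℝ → ℝ → ℝ)
    (hJpos : ∀ y : ℝ, ∀ t ∈ Set.Icc (0 : ℝ) T, 0 < J y t)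
    (hPt : ∀ y : ℝ, ∀ t ∈ Set.Icc (0 : ℝ) T,
      HasDerivWithinAt (fun s => P y s) (P' y t) (Set.Icc 0 T) t)
    (hP'c : ∀ y : ℝ, ContinuousOn (fun s => P' y s) (Set.Icc 0 T))
    (hGc : ∀ y : ℝ, ContinuousOn (fun s => Gflux lam J u P h y s) (Set.Icc 0 T))
    (hHc : ∀ y : ℝ, ContinuousOn (fun s => Hfield h y s) (Set.Icc 0 T))
    (hFc : ∀ y : ℝ, ContinuousOn (fun s => Fflux mu J ω h y s) (Set.Icc 0 T))
    (hhc : ∀ y : ℝ, ContinuousOn (fun s => h y s) (Set.Icc 0 T))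
    (heq : ∀ y : ℝ, ∀ t ∈ Set.Icc (0 : ℝ) T,
      P' y t + gam * (pdy u y t / J y t) * P y t
        = (gam - 1) * (lam * (pdy u y t / J y t) ^ 2 + mu * ‖(J y t)⁻¹ • pdyV ω y t‖ ^ 2)) :
    ∀ y : ℝ, ∀ t ∈ Set.Icc (0 : ℝ) T,
      P y t
        ≤ P y 0 + ∫ s in (0:ℝ)..t,
            ((gam ^ 2 / (4 * lam))
                * (Gflux lam J u P h y s + Hfield h y s / (8 * π)) ^ 2
              + ((gam - 1) / mu)
                * ‖Fflux mu J ω h y s - (1 / (4 * π)) • h y s‖ ^ 2) := by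
  
  intro y t ht
  obtain ⟨ht0, htT⟩ := ht
  set φ : ℝ → ℝ := fun s =>
    (gam ^ 2 / (4 * lam)) * (Gflux lam J u P h y s + Hfield h y s / (8 * π)) ^ 2
      + ((gam - 1) / mu) * ‖Fflux mu J ω h y s - (1 / (4 * π)) • h y s‖ ^ 2 with hφ
  have hsub : Set.Icc (0:ℝ) t ⊆ Set.Icc 0 T := Set.Icc_subset_Icc le_rfl htT
  -- pointwise bound on the derivative
  have hpt : ∀ s ∈ Set.Icc (0:ℝ) T, P' y s ≤ φ s := by
    intro s hs
    have he := heq y s hs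
    set v := pdy u y s / J y s with hv
    set w := (J y s)⁻¹ • pdyV ω y s with hw
    have hG : Gflux lam J u P h y s + Hfield h y s / (8 * π) = lam * v - P y s := by
      have : lam * pdy u y s / J y s = lam * v := by rw [hv, mul_div_assoc]
      simp only [Gflux, Hfield, this]
      ring
    have hF : Fflux mu J ω h y s - (1 / (4 * π)) • h y s = mu • w := by
      simp [Fflux, hw]
    have hP' : P' y s = -(gam * v * P y s) + (gam - 1) * (lam * v ^ 2 + mu * ‖w‖ ^ 2) := by
      linarith [he]
    rw [hφ]
    simp only [hG, hF, hP']
    have hnorm : ‖mu • w‖ ^ 2 = mu ^ 2 * ‖w‖ ^ 2 := by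
      rw [norm_smul, mul_pow]; simp [abs_of_pos hmu]
    rw [hnorm]
    have h2 : ((gam - 1) / mu) * (mu ^ 2 * ‖w‖ ^ 2) = (gam - 1) * (mu * ‖w‖ ^ 2) := by
      field_simp
    rw [h2]
    have key : -(gam * v * P y s) + (gam - 1) * (lam * v ^ 2)
        ≤ gam ^ 2 / (4 * lam) * (lam * v - P y s) ^ 2 := by
      rw [div_mul_eq_mul_div, le_div_iff₀ (by positivity)]
      nlinarith [sq_nonneg ((gam - 2) * lam * v - gam * P y s)]
    linarith
  have hPcont : ContinuousOn (fun s => P y s) (Set.Icc 0 T) :=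
    fun s hs => (hPt y s hs).continuousWithinAt
  have hint1 : IntervalIntegrable (fun s => P' y s) volume 0 t := by
    apply ContinuousOn.intervalIntegrable
    rw [Set.uIcc_of_le ht0]
    exact (hP'c y).mono hsub
  have hφc : ContinuousOn φ (Set.Icc 0 T) := by
    apply ContinuousOn.add
    · exact continuousOn_const.mul (((hGc y).add ((hHc y).div_const _)).pow 2)
    · exact continuousOn_const.mul ((((hFc y).sub ((hhc y).const_smul (1 / (4 * π) : ℝ))).norm).pow 2)
  have hint2 : IntervalIntegrable φ volume 0 t := by
    apply ContinuousOn.intervalIntegrable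
    rw [Set.uIcc_of_le ht0]
    exact hφc.mono hsub
  have hftc : ∫ s in (0:ℝ)..t, P' y s = P y t - P y 0 := by
    apply intervalIntegral.integral_eq_sub_of_hasDeriv_right_of_le ht0
      (hPcont.mono hsub) _ hint1
    intro x hx
    have hx' : Set.Icc (0:ℝ) T ∈ nhds x :=
      Icc_mem_nhds hx.1 (lt_of_lt_of_le hx.2 htT)
    exact ((hPt y x (mem_of_mem_nhds hx')).hasDerivAt hx').hasDerivWithinAt
  have hmono : ∫ s in (0:ℝ)..t, P' y s ≤ ∫ s in (0:ℝ)..t, φ s :=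
    intervalIntegral.integral_mono_on ht0 hint1 hint2 (fun s hs => hpt s (hsub hs))
  linarith [hftc, hmono]
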